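/- Av(Always-1; N, M) ≤ M · Av(Deterministic; N, M), locally at each vertex: fix M ≥ 1 and a configuration c : ℤ×ℤ → ℤ with nonnegative values. If S is a legal stabilising toppling sequence for amount M and threshold 4M from c, and T is a legal stabilising toppling sequence for amount 1 and threshold 4M from c, then for every vertex v, the occurrence count of v in T is at most M times the occurrence count of v in S; in particular the length of T is at most M times the length of S. -/

import Mathlib

/-- Configurations: finitely supported functions on `ℤ × ℤ` with integer values. -/
abbrev Config := (ℤ × ℤ) →₀ ℤ

/-- The four neighbours of a vertex `v = (x, y)` in `ℤ × ℤ`. -/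
def nbrs (v : ℤ × ℤ) : Finset (ℤ × ℤ) :=
  {(v.1 + 1, v.2), (v.1 - 1, v.2), (v.1, v.2 + 1), (v.1, v.2 - 1)}

/-- The amount-`k` toppling at `v`: `c − 4k·𝟙_v + k·Σ_{w∼v} 𝟙_w`. -/
noncomputable def topp (k : ℤ) (v : ℤ × ℤ) (c : Config) : Config :=
  c - Finsupp.single v (4 * k) + ∑ w ∈ nbrs v, Finsupp.single w k


/-- Applying the amount-`k` topplings along a list `S = (v₁, …, vₙ)`:
`Topp_k(vₙ) ∘ ⋯ ∘ Topp_k(v₁)`. -/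
noncomputable def toppList (k : ℤ) (S : List (ℤ × ℤ)) (c : Config) : Config :=
  S.foldl (fun c v => topp k v c) c

/-- `S` is a legal toppling sequence (amount `k`, threshold `T`) from `c`:
each toppled vertex is unstable at the time it topples. -/
def legal (k T : ℤ) : List (ℤ × ℤ) → Config → Prop
  | [], _ => True
  | v :: S, c => T ≤ c v ∧ legal k T S (topp k v c)

/-- `c` is stable for threshold `T`: every vertex has value `< T`. -/
def stable (T : ℤ) (c : Config) : Prop := ∀ v, c v < T

lemma nbrs_symm (v x : ℤ × ℤ) : v ∈ nbrs x ↔ x ∈ nbrs v := by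
  simp only [nbrs, Finset.mem_insert, Finset.mem_singleton, Prod.ext_iff]
  omega

lemma topp_apply (k : ℤ) (x : ℤ × ℤ) (c : Config) (v : ℤ × ℤ) :
    topp k x c v = c v - (if v = x then 4*k else 0) + (if v ∈ nbrs x then k else 0) := by
  simp [topp, Finsupp.single_apply, Finset.sum_ite_eq, eq_comm]
  intro h1 h2; exact absurd h2 h1

lemma count_cons' (x v : ℤ × ℤ) (T : List (ℤ × ℤ)) :
    (x :: T).count v = T.count v + (if v = x then 1 else 0) := by
  by_cases h : v = x <;> simp [h, List.count_cons] <;> exact Ne.symm h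

lemma toppList_apply (k : ℤ) : ∀ (T : List (ℤ × ℤ)) (c : Config) (v : ℤ × ℤ),
    toppList k T c v = c v - 4*k*(T.count v) + k * ∑ w ∈ nbrs v, (T.count w : ℤ)
  | [], c, v => by simp [toppList]
  | x :: T, c, v => by
    have ih := toppList_apply k T (topp k x c) v
    simp only [toppList, List.foldl_cons] at ih ⊢
    rw [ih, topp_apply]
    have h1 : ((x :: T).count v : ℤ) = (T.count v : ℤ) + (if v = x then 1 else 0) := by
      rw [count_cons']; push_cast; split <;> simp
    have h2 : ∑ w ∈ nbrs v, ((x :: T).count w : ℤ)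
        = (∑ w ∈ nbrs v, (T.count w : ℤ)) + (if x ∈ nbrs v then 1 else 0) := by
      have e1 : ∀ w ∈ nbrs v, ((x :: T).count w : ℤ) = (T.count w : ℤ) + (if w = x then 1 else 0) := by
        intro w _; rw [count_cons']; push_cast; split <;> simp
      rw [Finset.sum_congr rfl e1, Finset.sum_add_distrib,
        Finset.sum_ite_eq' (nbrs v) x (fun _ => (1:ℤ))]
    rw [h1, h2]
    have hs := nbrs_symm v x
    split_ifs <;> simp_all <;> ring

lemma list_toFinset_sum_count_eq : ∀ (L : List (ℤ × ℤ)),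
    ∑ v ∈ L.toFinset, L.count v = L.length
  | [] => by simp
  | x :: L => by
    have ih := list_toFinset_sum_count_eq L
    rw [List.toFinset_cons, List.length_cons,
      Finset.sum_congr rfl (fun v _ => count_cons' x v L), Finset.sum_add_distrib,
      Finset.sum_ite_eq' (insert x L.toFinset) x (fun _ => 1),
      if_pos (Finset.mem_insert_self x _)]
    by_cases hx : x ∈ L.toFinset
    · rw [Finset.insert_eq_self.mpr hx, ih]
    · rw [Finset.sum_insert hx,
        List.count_eq_zero_of_not_mem (List.mem_toFinset.not.mp hx), ih]
      omega

lemma lap (Θ : ℤ) : ∀ (T : List (ℤ × ℤ)) (c : Config) (u : ℤ × ℤ → ℕ),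
    legal 1 Θ T c →
    (∀ v, c v + ∑ w ∈ nbrs v, (u w : ℤ) < Θ + 4 * u v) →
    ∀ v, T.count v ≤ u v
  | [], _, _, _, _, v => by simp
  | x :: T, c, u, hleg, hstab, v => by
    obtain ⟨hx, hleg'⟩ := hleg
    have hux : 1 ≤ u x := by
      by_contra h
      have hx0 : (u x : ℤ) = 0 := by omega
      have h2 := hstab x
      have hnn : (0:ℤ) ≤ ∑ w ∈ nbrs x, (u w : ℤ) :=
        Finset.sum_nonneg (fun w _ => by positivity)
      omega
    set u' : ℤ × ℤ → ℕ := fun w => u w - (if w = x then 1 else 0) with hu'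
    have hu'c : ∀ w, (u' w : ℤ) = (u w : ℤ) - (if w = x then 1 else 0) := by
      intro w
      simp only [hu']
      split_ifs with h
      · subst h; omega
      · simp
    have key : ∀ v, topp 1 x c v + ∑ w ∈ nbrs v, (u' w : ℤ) < Θ + 4 * u' v := by
      intro v
      have h := hstab v
      rw [topp_apply, hu'c v]
      have hsum : ∑ w ∈ nbrs v, (u' w : ℤ)
          = (∑ w ∈ nbrs v, (u w : ℤ)) - (if x ∈ nbrs v then 1 else 0) := by
        rw [Finset.sum_congr rfl (fun w _ => hu'c w), Finset.sum_sub_distrib,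
          Finset.sum_ite_eq' (nbrs v) x (fun _ => (1:ℤ))]
      have hiff : (if x ∈ nbrs v then (1:ℤ) else 0) = (if v ∈ nbrs x then 1 else 0) := by
        simp only [nbrs_symm]
      rw [hsum, hiff]
      split_ifs <;> omega
    have ih := lap Θ T (topp 1 x c) u' hleg' key v
    rw [count_cons']
    have := hu'c v
    split_ifs at this ⊢ <;> omega


/-- `Av(Always-1; N, M) ≤ M · Av(Deterministic; N, M)`, locally at each vertex:
if `S` is a legal stabilising sequence for amount `M`, threshold `4M` from a nonnegative
configuration `c`, and `T` is a legal stabilising sequence for amount `1`, threshold `4M`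
from `c`, then each vertex occurs in `T` at most `M` times as often as in `S`; in
particular the length of `T` is at most `M` times the length of `S`. -/
theorem always1_le_deterministic (M : ℕ) (hM : 1 ≤ M) (c : Config)
    (hc : ∀ v, 0 ≤ c v) (S T : List (ℤ × ℤ))
    (hS : legal (M : ℤ) (4 * M) S c) (hSstab : stable (4 * M) (toppList (M : ℤ) S c))
    (hT : legal 1 (4 * M) T c) (hTstab : stable (4 * M) (toppList 1 T c)) :
    (∀ v : ℤ × ℤ, T.count v ≤ M * S.count v) ∧ T.length ≤ M * S.length := by
  have hcount : ∀ v : ℤ × ℤ, T.count v ≤ M * S.count v := by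
    refine lap (4*M) T c (fun v => M * S.count v) hT ?_
    intro v
    have h := hSstab v
    rw [toppList_apply] at h
    have hsum : ∑ w ∈ nbrs v, ((M * S.count w : ℕ) : ℤ)
        = (M : ℤ) * ∑ w ∈ nbrs v, (S.count w : ℤ) := by
      rw [Finset.mul_sum]; push_cast; rfl
    simp only [hsum]
    push_cast at h ⊢
    linarith
  refine ⟨hcount, ?_⟩
  have h1 : T.length = ∑ v ∈ T.toFinset, T.count v := (list_toFinset_sum_count_eq T).symm
  have h2 : ∑ v ∈ T.toFinset, S.count v ≤ S.length := by
    calc ∑ v ∈ T.toFinset, S.count v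
        ≤ ∑ v ∈ T.toFinset ∪ S.toFinset, S.count v :=
          Finset.sum_le_sum_of_subset Finset.subset_union_left
      _ = ∑ v ∈ S.toFinset, S.count v := (Finset.sum_subset Finset.subset_union_right
          (fun x _ hx => List.count_eq_zero_of_not_mem (List.mem_toFinset.not.mp hx))).symm
      _ = S.length := list_toFinset_sum_count_eq S
  calc T.length = ∑ v ∈ T.toFinset, T.count v := h1
    _ ≤ ∑ v ∈ T.toFinset, M * S.count v := Finset.sum_le_sum (fun v _ => hcount v)
    _ = M * ∑ v ∈ T.toFinset, S.count v := (Finset.mul_sum _ _ _).symm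
    _ ≤ M * S.length := Nat.mul_le_mul_left M h2
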